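/- If transfinite induction up to α holds for the Gentzen jump of A, and A is progressive, then transfinite induction up to ω^α holds for A: i.e., if Prog(A) and (Prog(A⁺) → ∀ξ < α, A⁺(ξ)) and moreover A⁺ is progressive whenever A is, then ∀η < ω^α, A(η). -/

import Mathlib

open Ordinal

def Prog (B : Ordinal → Prop) : Prop := ∀ θ, (∀ ζ < θ, B ζ) → B θ

def Jump (A : Ordinal → Prop) (θ : Ordinal) : Prop :=
  ∀ ξ, (∀ η < ξ, A η) → ∀ η < ξ + omega0 ^ θ, A η

theorem ti_lift (A : Ordinal → Prop) (α : Ordinal)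
    (hA : Prog A)
    (hTI : Prog (Jump A) → ∀ ξ < α, Jump A ξ)
    (hJ : Prog A → Prog (Jump A)) :
    ∀ η < omega0 ^ α, A η := by
  intro η hη
  have hPJ := hJ hA
  have hJα : Jump A α := hPJ α (hTI hPJ)
  have := hJα 0 (fun η h => absurd h ((zero_le (a := η)).not_gt)) η
  rw [zero_add] at this
  exact this hη
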